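/- (Generalized Noether theorem, converse direction.) Let H_e : ℝⁿ × ℝⁿ × ℝ × ℝ → ℝ be continuously differentiable and I : ℝⁿ × ℝⁿ × ℝ × ℝ → ℝ be differentiable. If for every differentiable solution s ↦ z(s) of the extended canonical equations for H_e the function s ↦ I(z(s)) is constant, then the extended Poisson bracket [H_e, I]_ext vanishes at every point of ℝⁿ × ℝⁿ × ℝ × ℝ. -/

import Mathlib

/-- The extended phase space `ℝⁿ × ℝⁿ × ℝ × ℝ` with coordinates `(q, p, t, e)`. -/
abbrev ExtPhase (n : ℕ) : Type := (Fin n → ℝ) × (Fin n → ℝ) × ℝ × ℝ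

/-- Partial derivative `∂F/∂qⁱ`. -/
noncomputable def pdQ {n : ℕ} (F : ExtPhase n → ℝ) (i : Fin n) (z : ExtPhase n) : ℝ :=
  fderiv ℝ F z (Pi.single i 1, 0, 0, 0)

/-- Partial derivative `∂F/∂pᵢ`. -/
noncomputable def pdP {n : ℕ} (F : ExtPhase n → ℝ) (i : Fin n) (z : ExtPhase n) : ℝ :=
  fderiv ℝ F z (0, Pi.single i 1, 0, 0)

/-- Partial derivative `∂F/∂t`. -/
noncomputable def pdT {n : ℕ} (F : ExtPhase n → ℝ) (z : ExtPhase n) : ℝ :=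
  fderiv ℝ F z (0, 0, 1, 0)

/-- Partial derivative `∂F/∂e`. -/
noncomputable def pdE {n : ℕ} (F : ExtPhase n → ℝ) (z : ExtPhase n) : ℝ :=
  fderiv ℝ F z (0, 0, 0, 1)

/-- The extended Hamiltonian vector field: the extended canonical equations read
`dq/ds = ∂He/∂p`, `dp/ds = −∂He/∂q`, `dt/ds = −∂He/∂e`, `de/ds = ∂He/∂t`. -/
noncomputable def extVF {n : ℕ} (He : ExtPhase n → ℝ) (z : ExtPhase n) : ExtPhase n :=
  (fun i => pdP He i z, fun i => -pdQ He i z, -pdE He z, pdT He z)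

/-- The extended Poisson bracket
`[F,G]_ext = Σᵢ (∂F/∂qⁱ ∂G/∂pᵢ − ∂F/∂pᵢ ∂G/∂qⁱ) − ∂F/∂t ∂G/∂e + ∂F/∂e ∂G/∂t`. -/
noncomputable def extPB {n : ℕ} (F G : ExtPhase n → ℝ) (z : ExtPhase n) : ℝ :=
  (∑ i, (pdQ F i z * pdP G i z - pdP F i z * pdQ G i z))
    - pdT F z * pdE G z + pdE F z * pdT G z


section AuxNoether

open Set Filter intervalIntegral MeasureTheory Topology

section Peano

variable {E : Type*} [NormedAddCommGroup E] [NormedSpace ℝ E]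

/-- Delayed (Tonelli) approximations to a solution of `x' = v x`, `x 0 = x₀`. -/
noncomputable def approx (v : E → E) (x₀ : E) (δ : ℝ) : ℕ → ℝ → E
  | 0 => fun _ => x₀
  | (j+1) => fun s => x₀ + ∫ u in (0:ℝ)..(max s 0), v (approx v x₀ δ j (u - δ))

variable {v : E → E} {x₀ : E} {δ M : ℝ}

lemma approx_cont (hv : Continuous v) (j : ℕ) :
    Continuous (approx v x₀ δ j) := by
  induction j with
  | zero => exact continuous_const
  | succ j ih =>
    show Continuous fun s => x₀ + ∫ u in (0:ℝ)..(max s 0), v (approx v x₀ δ j (u - δ))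
    have hint : Continuous fun u : ℝ => v (approx v x₀ δ j (u - δ)) :=
      hv.comp (ih.comp (continuous_id.sub continuous_const))
    exact continuous_const.add
      ((intervalIntegral.continuous_primitive (fun a b => hint.intervalIntegrable a b) 0).comp
        (continuous_id.max continuous_const))

lemma approx_nonpos (j : ℕ) {s : ℝ} (hs : s ≤ 0) : approx v x₀ δ j s = x₀ := by
  cases j with
  | zero => rfl
  | succ j =>
    show x₀ + ∫ u in (0:ℝ)..(max s 0), v (approx v x₀ δ j (u - δ)) = x₀
    rw [max_eq_right hs, intervalIntegral.integral_same, add_zero]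

lemma approx_mem (hM1 : 1 ≤ M) (hδ : 0 ≤ δ)
    (hM : ∀ x ∈ Metric.closedBall x₀ 1, ‖v x‖ ≤ M)
    (j : ℕ) : ∀ s ≤ M⁻¹, approx v x₀ δ j s ∈ Metric.closedBall x₀ 1 := by
  have hM0 : (0:ℝ) < M := lt_of_lt_of_le one_pos hM1
  induction j with
  | zero => intro s _; exact Metric.mem_closedBall_self one_pos.le
  | succ j ih =>
    intro s hs
    show x₀ + (∫ u in (0:ℝ)..(max s 0), v (approx v x₀ δ j (u - δ))) ∈ Metric.closedBall x₀ 1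
    rw [mem_closedBall_iff_norm, add_sub_cancel_left]
    have hmax : max s 0 ≤ M⁻¹ := max_le hs (inv_nonneg.2 hM0.le)
    have hb : ∀ u ∈ Set.uIoc (0:ℝ) (max s 0), ‖v (approx v x₀ δ j (u - δ))‖ ≤ M := by
      intro u hu
      rw [Set.uIoc_of_le (le_max_right s 0)] at hu
      have hu' : u - δ ≤ M⁻¹ := le_trans (by linarith [hu.2]) hmax
      exact hM _ (ih _ hu')
    calc ‖∫ u in (0:ℝ)..(max s 0), v (approx v x₀ δ j (u - δ))‖
        ≤ M * |max s 0 - 0| := intervalIntegral.norm_integral_le_of_norm_le_const hb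
      _ = M * max s 0 := by rw [sub_zero, abs_of_nonneg (le_max_right s 0)]
      _ ≤ M * M⁻¹ := mul_le_mul_of_nonneg_left hmax hM0.le
      _ = 1 := mul_inv_cancel₀ hM0.ne'

lemma approx_lip (hv : Continuous v) (hM1 : 1 ≤ M) (hδ : 0 ≤ δ)
    (hM : ∀ x ∈ Metric.closedBall x₀ 1, ‖v x‖ ≤ M)
    (j : ℕ) : ∀ s₁ ≤ M⁻¹, ∀ s₂ ≤ M⁻¹,
      ‖approx v x₀ δ j s₂ - approx v x₀ δ j s₁‖ ≤ M * |s₂ - s₁| := by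
  have hM0 : (0:ℝ) < M := lt_of_lt_of_le one_pos hM1
  cases j with
  | zero =>
    intro s₁ _ s₂ _
    show ‖x₀ - x₀‖ ≤ M * |s₂ - s₁|
    rw [sub_self, norm_zero]; positivity
  | succ j =>
    intro s₁ hs₁ s₂ hs₂
    have hint : Continuous fun u : ℝ => v (approx v x₀ δ j (u - δ)) :=
      hv.comp ((approx_cont hv j).comp (continuous_id.sub continuous_const))
    have key : approx v x₀ δ (j+1) s₂ - approx v x₀ δ (j+1) s₁
        = ∫ u in (max s₁ 0)..(max s₂ 0), v (approx v x₀ δ j (u - δ)) := by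
      show (x₀ + _) - (x₀ + _) = _
      rw [add_sub_add_left_eq_sub]
      exact intervalIntegral.integral_interval_sub_left
        (hint.intervalIntegrable _ _) (hint.intervalIntegrable _ _)
    rw [key]
    have hmax : max (max s₁ 0) (max s₂ 0) ≤ M⁻¹ :=
      max_le (max_le hs₁ (inv_nonneg.2 hM0.le)) (max_le hs₂ (inv_nonneg.2 hM0.le))
    have hb : ∀ u ∈ Set.uIoc (max s₁ 0) (max s₂ 0), ‖v (approx v x₀ δ j (u - δ))‖ ≤ M := by
      intro u hu
      have hu2 : u ≤ M⁻¹ := le_trans hu.2 hmax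
      exact hM _ (approx_mem hM1 hδ hM j _ (by linarith))
    calc ‖∫ u in (max s₁ 0)..(max s₂ 0), v (approx v x₀ δ j (u - δ))‖
        ≤ M * |max s₂ 0 - max s₁ 0| := intervalIntegral.norm_integral_le_of_norm_le_const hb
      _ ≤ M * |s₂ - s₁| :=
          mul_le_mul_of_nonneg_left (abs_max_sub_max_le_abs s₂ s₁ 0) hM0.le

lemma approx_stab (hδ : 0 < δ) (j : ℕ) :
    ∀ s ≤ (j : ℝ) * δ, approx v x₀ δ (j+1) s = approx v x₀ δ j s := by
  induction j with
  | zero =>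
    intro s hs
    rw [approx_nonpos 1 (by simpa using hs), approx_nonpos 0 (by simpa using hs)]
  | succ j ih =>
    intro s hs
    show x₀ + ∫ u in (0:ℝ)..(max s 0), v (approx v x₀ δ (j+1) (u - δ))
        = x₀ + ∫ u in (0:ℝ)..(max s 0), v (approx v x₀ δ j (u - δ))
    congr 1
    apply intervalIntegral.integral_congr
    intro u hu
    rw [Set.uIcc_of_le (le_max_right s 0)] at hu
    have h1 : ((j+1 : ℕ) : ℝ) * δ = (j : ℝ) * δ + δ := by push_cast; ring
    have hle : u ≤ (j : ℝ) * δ + δ := by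
      have : max s 0 ≤ (j : ℝ) * δ + δ := by
        apply max_le (by rw [h1] at hs; exact hs)
        positivity
      exact le_trans hu.2 this
    have : u - δ ≤ (j : ℝ) * δ := by linarith
    simp only [Function.comp]
    rw [ih _ this]

lemma approx_eq (hδ : 0 < δ) (j : ℕ) {s : ℝ} (hs : s ≤ (j : ℝ) * δ) :
    approx v x₀ δ j s = x₀ + ∫ u in (0:ℝ)..(max s 0), v (approx v x₀ δ j (u - δ)) :=
  (approx_stab hδ j s hs).symm

end Peano

section PeanoMain
variable {E : Type*} [NormedAddCommGroup E] [NormedSpace ℝ E] [FiniteDimensional ℝ E]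

theorem peano (v : E → E) (hv : Continuous v) (x₀ : E) :
    ∃ ε > (0:ℝ), ∃ f : ℝ → E, f 0 = x₀ ∧
      ∀ s ∈ Set.Icc 0 ε, HasDerivWithinAt f (v (f s)) (Set.Icc 0 ε) s := by
  obtain ⟨C, hC⟩ := (isCompact_closedBall x₀ 1).exists_bound_of_continuousOn hv.continuousOn
  set M : ℝ := max C 1 with hMdef
  have hM1 : (1:ℝ) ≤ M := le_max_right _ _
  have hM0 : (0:ℝ) < M := lt_of_lt_of_le one_pos hM1
  have hM : ∀ x ∈ Metric.closedBall x₀ 1, ‖v x‖ ≤ M := fun x hx =>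
    le_trans (hC x hx) (le_max_left _ _)
  have hε : 0 < M⁻¹ := inv_pos.2 hM0
  set ε : ℝ := M⁻¹ with hεdef
  -- the delayed approximations
  set δk : ℕ → ℝ := fun k => ε / (k+1) with hδkdef
  have hδk : ∀ k, 0 < δk k := fun k => div_pos hε (by positivity)
  set Fk : ℕ → ℝ → E := fun k => approx v x₀ (δk k) (k+1) with hFkdef
  have hjδ : ∀ k : ℕ, ((k+1 : ℕ) : ℝ) * δk k = ε := by
    intro k
    have : ((k:ℝ)+1) ≠ 0 := by positivity
    push_cast
    simp only [hδkdef]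
    field_simp
  have hFeq : ∀ k : ℕ, ∀ s ≤ ε, Fk k s
      = x₀ + ∫ u in (0:ℝ)..(max s 0), v (Fk k (u - δk k)) := by
    intro k s hs
    exact approx_eq (hδk k) (k+1) (by rw [hjδ k]; exact hs)
  have hFmem : ∀ k : ℕ, ∀ s ≤ ε, Fk k s ∈ Metric.closedBall x₀ 1 :=
    fun k => approx_mem hM1 (hδk k).le hM (k+1)
  have hFlip : ∀ k : ℕ, ∀ s₁ ≤ ε, ∀ s₂ ≤ ε, ‖Fk k s₂ - Fk k s₁‖ ≤ M * |s₂ - s₁| :=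
    fun k => approx_lip hv hM1 (hδk k).le hM (k+1)
  -- Arzelà–Ascoli on C(Icc 0 ε, E)
  set X := Set.Icc (0:ℝ) ε with hXdef
  set S : Set C(X, E) :=
    {f | (∀ x : X, f x ∈ Metric.closedBall x₀ 1) ∧
      ∀ x y : X, dist (f x) (f y) ≤ M * dist x y} with hSdef
  have hS1 : IsCompact (ContinuousMap.toFun '' S) := by
    have himg : ContinuousMap.toFun '' S
        = {g : X → E | (∀ x : X, g x ∈ Metric.closedBall x₀ 1) ∧
            ∀ x y : X, dist (g x) (g y) ≤ M * dist x y} := by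
      ext g
      constructor
      · rintro ⟨f, hf, rfl⟩; exact hf
      · intro hg
        have : LipschitzWith M.toNNReal g := LipschitzWith.of_dist_le_mul (by
          intro x y
          rw [Real.coe_toNNReal _ hM0.le]
          exact hg.2 x y)
        exact ⟨⟨g, this.continuous⟩, hg, rfl⟩
    rw [himg]
    apply IsCompact.of_isClosed_subset
      (isCompact_univ_pi fun _ : X => isCompact_closedBall x₀ 1)
    · rw [Set.setOf_and]
      apply IsClosed.inter
      · have : {g : X → E | ∀ x : X, g x ∈ Metric.closedBall x₀ 1}
            = ⋂ x : X, {g : X → E | g x ∈ Metric.closedBall x₀ 1} := Set.setOf_forall _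
        rw [this]
        exact isClosed_iInter fun x =>
          (Metric.isClosed_closedBall).preimage (continuous_apply x)
      · have : {g : X → E | ∀ x y : X, dist (g x) (g y) ≤ M * dist x y}
            = ⋂ x : X, ⋂ y : X, {g : X → E | dist (g x) (g y) ≤ M * dist x y} := by
          rw [Set.setOf_forall]
          exact Set.iInter_congr fun x => Set.setOf_forall _
        rw [this]
        exact isClosed_iInter fun x => isClosed_iInter fun y =>
          isClosed_le ((continuous_apply x).dist (continuous_apply y)) continuous_const
    · intro g hg x _
      exact hg.1 x
  have hS2 : Equicontinuous ((↑) : S → X → E) := by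
    intro x
    apply Metric.equicontinuousAt_of_continuity_modulus (fun y : X => M * dist y x)
    · have : Continuous fun y : X => M * dist y x :=
        continuous_const.mul (continuous_id.dist continuous_const)
      simpa using (this.tendsto x)
    · filter_upwards with y f
      calc dist ((f : C(X,E)) x) ((f : C(X,E)) y) ≤ M * dist x y := f.2.2 x y
        _ = M * dist y x := by rw [dist_comm]
  have hScpt : IsCompact S := ArzelaAscoli.isCompact_of_equicontinuous S hS1 hS2
  -- the sequence in S
  set Gk : ℕ → C(X, E) := fun k =>
    ⟨fun x => Fk k x, (approx_cont hv (k+1)).comp continuous_subtype_val⟩ with hGkdef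
  have hGkS : ∀ k, Gk k ∈ S := by
    intro k
    constructor
    · intro x; exact hFmem k x x.2.2
    · intro x y
      have h' : dist (Fk k (x:ℝ)) (Fk k (y:ℝ)) ≤ M * dist (x:ℝ) (y:ℝ) := by
        rw [dist_eq_norm, Real.dist_eq]
        exact hFlip k y y.2.2 x x.2.2
      rw [Subtype.dist_eq]; exact h'
  obtain ⟨f, hfS, φ, hφ, hconv⟩ := hScpt.tendsto_subseq hGkS
  -- pointwise convergence
  have hpt : ∀ x : X, Tendsto (fun k => Fk (φ k) (x : ℝ)) atTop (𝓝 (f x)) := by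
    intro x
    exact ((continuous_eval_const x).tendsto f).comp hconv
  have hδφ : Tendsto (fun k => δk (φ k)) atTop (𝓝 0) := by
    apply squeeze_zero (fun k => (hδk (φ k)).le) (g := fun k : ℕ => ε / ((k:ℝ)+1))
    · intro k
      apply div_le_div_of_nonneg_left hε.le (by positivity)
      have : (k : ℝ) ≤ (φ k : ℝ) := by exact_mod_cast hφ.le_apply
      linarith
    · have := tendsto_one_div_add_atTop_nhds_zero_nat.const_mul ε
      simpa [div_eq_mul_inv, mul_comm, mul_assoc] using this
  -- extension of the limit to ℝ
  set z : ℝ → E := fun u => f (Set.projIcc 0 ε hε.le u) with hzdef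
  have hzc : Continuous z := f.continuous.comp continuous_projIcc
  have hzx : ∀ x : X, z (x : ℝ) = f x := by
    intro x
    rw [hzdef]
    simp only
    rw [Set.projIcc_of_mem hε.le x.2]
  -- the limit integral equation
  have heq : ∀ x : X, f x = x₀ + ∫ u in (0:ℝ)..(x:ℝ), v (z u) := by
    intro x
    have hs0 : (0:ℝ) ≤ (x:ℝ) := x.2.1
    have hsε : (x:ℝ) ≤ ε := x.2.2
    have hR : Tendsto (fun k => x₀ + ∫ u in (0:ℝ)..(x:ℝ), v (Fk (φ k) (u - δk (φ k))))
        atTop (𝓝 (x₀ + ∫ u in (0:ℝ)..(x:ℝ), v (z u))) := by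
      apply Tendsto.const_add
      apply intervalIntegral.tendsto_integral_filter_of_dominated_convergence
        (bound := fun _ => M)
      · filter_upwards with k
        exact ((hv.comp ((approx_cont hv _).comp
          (continuous_id.sub continuous_const))).aestronglyMeasurable).restrict
      · filter_upwards with k
        apply ae_of_all
        intro u hu
        rw [Set.uIoc_of_le hs0] at hu
        have h1 : u - δk (φ k) ≤ ε := by linarith [hu.2, hsε, (hδk (φ k)).le]
        exact hM _ (hFmem (φ k) _ h1)
      · exact intervalIntegrable_const
      · apply ae_of_all
        intro u hu
        rw [Set.uIoc_of_le hs0] at hu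
        have huε : u ≤ ε := le_trans hu.2 hsε
        have huI : u ∈ X := ⟨hu.1.le, huε⟩
        have hzu : z u = f ⟨u, huI⟩ := hzx ⟨u, huI⟩
        have htd : Tendsto (fun k => Fk (φ k) (u - δk (φ k))) atTop (𝓝 (z u)) := by
          rw [tendsto_iff_dist_tendsto_zero]
          apply squeeze_zero (fun k => dist_nonneg)
            (g := fun k => M * δk (φ k) + dist (Fk (φ k) u) (f ⟨u, huI⟩))
          · intro k
            have hd1 : dist (Fk (φ k) (u - δk (φ k))) (Fk (φ k) u) ≤ M * δk (φ k) := by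
              rw [dist_eq_norm]
              have h2 := hFlip (φ k) u huε (u - δk (φ k))
                (by linarith [(hδk (φ k)).le])
              have h3 : |u - δk (φ k) - u| = δk (φ k) := by
                have : u - δk (φ k) - u = -(δk (φ k)) := by ring
                rw [this, abs_neg, abs_of_nonneg (hδk (φ k)).le]
              rwa [h3] at h2
            rw [hzu]
            exact (dist_triangle _ (Fk (φ k) u) _).trans (add_le_add hd1 le_rfl)
          · have h4 : Tendsto (fun k => M * δk (φ k)) atTop (𝓝 (M * 0)) :=
              hδφ.const_mul M
            rw [mul_zero] at h4
            have h5 := tendsto_iff_dist_tendsto_zero.mp (hpt ⟨u, huI⟩)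
            have h5' : Tendsto (fun k => dist (Fk (φ k) u) (f ⟨u, huI⟩)) atTop (𝓝 0) := h5
            simpa using h4.add h5'
        exact ((hv.tendsto (z u)).comp htd)
    have hcongr : ∀ k, Fk (φ k) (x:ℝ)
        = x₀ + ∫ u in (0:ℝ)..(x:ℝ), v (Fk (φ k) (u - δk (φ k))) := by
      intro k
      have := hFeq (φ k) (x:ℝ) hsε
      rwa [max_eq_left hs0] at this
    exact tendsto_nhds_unique ((hpt x).congr hcongr) hR
  -- conclusion
  refine ⟨ε, hε, z, ?_, ?_⟩
  · have h0X : (0:ℝ) ∈ X := ⟨le_rfl, hε.le⟩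
    have h0 : z 0 = f ⟨0, h0X⟩ := hzx ⟨0, h0X⟩
    rw [h0, heq ⟨0, h0X⟩]
    simp
  · intro s hs
    have hw : Continuous fun u => v (z u) := hv.comp hzc
    have hzh : ∀ y ∈ Set.Icc (0:ℝ) ε, z y = x₀ + ∫ u in (0:ℝ)..y, v (z u) :=
      fun y hy => (hzx ⟨y, hy⟩).trans (heq ⟨y, hy⟩)
    have hd : HasDerivAt (fun y => x₀ + ∫ u in (0:ℝ)..y, v (z u)) (v (z s)) s := by
      apply HasDerivAt.const_add
      exact intervalIntegral.integral_hasDerivAt_right (hw.intervalIntegrable 0 s)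
        (hw.stronglyMeasurableAtFilter volume (𝓝 s)) hw.continuousAt
    exact hd.hasDerivWithinAt.congr hzh (hzh s hs)
end PeanoMain

/-- Decomposition of a continuous linear functional on extended phase space. -/
lemma clm_decomp {n : ℕ} (L : ExtPhase n →L[ℝ] ℝ) (w : ExtPhase n) :
    L w = (∑ i, w.1 i * L (Pi.single i 1, 0, 0, 0))
      + (∑ i, w.2.1 i * L (0, Pi.single i 1, 0, 0))
      + w.2.2.1 * L (0, 0, 1, 0) + w.2.2.2 * L (0, 0, 0, 1) := by
  obtain ⟨a, b, c, d⟩ := w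
  have hsingle : ∀ (r : ℝ) (i : Fin n), r • (Pi.single i 1 : Fin n → ℝ) = Pi.single i r := by
    intro r i
    ext j
    by_cases h : j = i <;> simp [Pi.single_apply, h]
  have hw : (a, b, c, d)
      = (∑ i, a i • ((Pi.single i 1 : Fin n → ℝ), (0 : Fin n → ℝ), (0:ℝ), (0:ℝ)))
        + (∑ i, b i • ((0 : Fin n → ℝ), (Pi.single i 1 : Fin n → ℝ), (0:ℝ), (0:ℝ)))
        + c • ((0 : Fin n → ℝ), (0 : Fin n → ℝ), (1:ℝ), (0:ℝ))
        + d • ((0 : Fin n → ℝ), (0 : Fin n → ℝ), (0:ℝ), (1:ℝ)) := by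
    refine Prod.ext ?_ (Prod.ext ?_ (Prod.ext ?_ ?_)) <;>
      simp [Prod.fst_sum, Prod.snd_sum, Prod.smul_mk, hsingle, Finset.univ_sum_single]
  conv_lhs => rw [hw]
  simp only [map_add, map_sum, _root_.map_smul, smul_eq_mul]


lemma extVF_continuous {n : ℕ} {He : ExtPhase n → ℝ} (hHe : ContDiff ℝ 1 He) :
    Continuous (extVF He) := by
  have hfd : Continuous (fderiv ℝ He) := hHe.continuous_fderiv one_ne_zero
  unfold extVF pdQ pdP pdT pdE
  exact ((continuous_pi fun i => hfd.clm_apply continuous_const).prodMk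
    (((continuous_pi fun i => (hfd.clm_apply continuous_const).neg)).prodMk
      (((hfd.clm_apply continuous_const).neg).prodMk (hfd.clm_apply continuous_const))))


end AuxNoether

/-- generalized Noether theorem, converse direction: if a
differentiable function `I` is constant along every differentiable solution of
the extended canonical equations of a continuously differentiable extended
Hamiltonian `He`, then the extended Poisson bracket `[He, I]_ext` vanishes at
every point of extended phase space. -/
theorem generalized_noether_converse
    {n : ℕ} (He I : ExtPhase n → ℝ)
    (hHe : ContDiff ℝ 1 He) (hI : Differentiable ℝ I)
    (hconst : ∀ S : Set ℝ, Convex ℝ S → ∀ z : ℝ → ExtPhase n,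
      (∀ s ∈ S, HasDerivWithinAt z (extVF He (z s)) S s) →
      ∀ s₁ ∈ S, ∀ s₂ ∈ S, I (z s₁) = I (z s₂)) :
    ∀ z₀ : ExtPhase n, extPB He I z₀ = 0 := by
  intro z₀
  obtain ⟨ε, hε, f, hf0, hfd⟩ := peano (extVF He) (extVF_continuous hHe) z₀
  have h0mem : (0:ℝ) ∈ Set.Icc (0:ℝ) ε := ⟨le_rfl, hε.le⟩
  -- derivative of I ∘ f at 0
  have hIf : HasDerivWithinAt (fun s => I (f s)) (fderiv ℝ I (f 0) (extVF He (f 0)))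
      (Set.Icc 0 ε) 0 :=
    (hI (f 0)).hasFDerivAt.comp_hasDerivWithinAt 0 (hfd 0 h0mem)
  have hIconst := hconst (Set.Icc 0 ε) (convex_Icc 0 ε) f hfd
  have hzero : HasDerivWithinAt (fun s => I (f s)) 0 (Set.Icc 0 ε) 0 :=
    (hasDerivWithinAt_const 0 (Set.Icc 0 ε) (I (f 0))).congr
      (fun y hy => hIconst y hy 0 h0mem) rfl
  have hu : UniqueDiffWithinAt ℝ (Set.Icc (0:ℝ) ε) 0 := uniqueDiffOn_Icc hε 0 h0mem
  have hc0 : fderiv ℝ I z₀ (extVF He z₀) = 0 := by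
    rw [← hf0]
    rw [← hIf.derivWithin hu, hzero.derivWithin hu]
  -- expand via the decomposition lemma
  rw [clm_decomp (fderiv ℝ I z₀) (extVF He z₀)] at hc0
  have h1 : (extVF He z₀).1 = fun i => pdP He i z₀ := rfl
  have h2 : (extVF He z₀).2.1 = fun i => -pdQ He i z₀ := rfl
  have h3 : (extVF He z₀).2.2.1 = -pdE He z₀ := rfl
  have h4 : (extVF He z₀).2.2.2 = pdT He z₀ := rfl
  rw [h1, h2, h3, h4] at hc0
  have hc0' : (∑ i, pdP He i z₀ * pdQ I i z₀) + (∑ i, -(pdQ He i z₀ * pdP I i z₀))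
      + (-pdE He z₀) * pdT I z₀ + pdT He z₀ * pdE I z₀ = 0 := by
    have e1 : ∀ i : Fin n, pdP He i z₀ * fderiv ℝ I z₀ (Pi.single i 1, 0, 0, 0)
        = pdP He i z₀ * pdQ I i z₀ := fun i => rfl
    convert hc0 using 3 <;> simp [pdQ, pdP, pdT, pdE, neg_mul]
  unfold extPB
  rw [Finset.sum_sub_distrib]
  rw [Finset.sum_neg_distrib] at hc0'
  rw [neg_mul] at hc0'
  have hcomm1 : (∑ i, pdP He i z₀ * pdQ I i z₀) = ∑ i, pdQ I i z₀ * pdP He i z₀ :=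
    Finset.sum_congr rfl fun i _ => mul_comm _ _
  have hcomm2 : (∑ i, pdQ He i z₀ * pdP I i z₀) = ∑ i, pdP I i z₀ * pdQ He i z₀ :=
    Finset.sum_congr rfl fun i _ => mul_comm _ _
  linarith [hc0']
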